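/- M_{a,b,c}(q) equals the sum over plane partitions π fitting inside an a × b × c box of q^{|π|}, where |π| is the number of boxes of π; i.e., MacMahon's boxed plane partition formula holds. -/

import Mathlib

open PowerSeries Finset

/-- MacMahon's boxed plane partition generating function (0-based indices). -/
noncomputable def Mbox (a b c : ℕ) : PowerSeries ℚ :=
  ∏ s ∈ Finset.range a, ∏ t ∈ Finset.range b, ∏ r ∈ Finset.range c,
    (1 - (PowerSeries.X : PowerSeries ℚ) ^ (s + t + r + 2)) *
      ((1 : PowerSeries ℚ) - PowerSeries.X ^ (s + t + r + 1))⁻¹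

/-- Plane partitions fitting in an \`a × b × c\` box: \`a × b\` arrays of entries in
\`[0, c]\`, weakly decreasing along rows and columns. -/
def IsBoxedPP (a b c : ℕ) (π : Fin a → Fin b → ℕ) : Prop :=
  (∀ i j, π i j ≤ c) ∧
    (∀ i i' j, i ≤ i' → π i' j ≤ π i j) ∧
    (∀ i j j', j ≤ j' → π i j' ≤ π i j)

namespace MacMahonAux

noncomputable section

abbrev K : Type := RatFunc ℚ

def q : K := RatFunc.X

lemma q_ne_zero : (q : K) ≠ 0 := RatFunc.X_ne_zero

lemma q_pow_ne_zero (k : ℕ) : (q : K) ^ k ≠ 0 := pow_ne_zero _ q_ne_zero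

lemma one_sub_q_pow_ne_zero {k : ℕ} (hk : k ≠ 0) : (1 : K) - q ^ k ≠ 0 := by
  intro h
  have h1 : (q : K) ^ k = 1 := by linear_combination -h
  have h2 : (algebraMap (Polynomial ℚ) K) (Polynomial.X ^ k) =
      algebraMap (Polynomial ℚ) K 1 := by
    simpa [map_pow, RatFunc.algebraMap_X, q] using h1
  have h3 : (Polynomial.X : Polynomial ℚ) ^ k = 1 := RatFunc.algebraMap_injective ℚ h2
  have h4 := congrArg (fun p => Polynomial.coeff p 0) h3
  simp [Polynomial.coeff_X_pow] at h4
  exact hk h4.symm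

/-- conversion between `Fin`-indexed pair products and `range`-indexed ones. -/
lemma prod_pairs (m : ℕ) (g : ℕ → ℕ → K) :
    (∏ i : Fin m, ∏ j ∈ Ioi i, g (i : ℕ) (j : ℕ)) =
      ∏ j ∈ range m, ∏ i ∈ range j, g i j := by
  have step1 : (∏ i : Fin m, ∏ j ∈ Ioi i, g (i : ℕ) (j : ℕ)) =
      ∏ i ∈ range m, ∏ j ∈ Ico (i+1) m, g i j := by
    rw [← Fin.prod_univ_eq_prod_range (fun i => ∏ j ∈ Ico (i+1) m, g i j) m]
    refine Finset.prod_congr rfl fun i _ => ?_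
    refine Finset.prod_bij' (fun j _ => (j : ℕ)) (fun x hx => ⟨x, (mem_Ico.1 hx).2⟩) ?_ ?_ ?_ ?_ ?_
    · intro j hj
      rw [Finset.mem_Ioi] at hj
      rw [mem_Ico]
      exact ⟨Nat.succ_le_of_lt hj, j.isLt⟩
    · intro x hx
      rw [Finset.mem_Ioi]
      rw [mem_Ico] at hx
      rw [Fin.lt_def]
      simpa using hx.1
    · intro j hj; simp
    · intro x hx; simp
    · intro j hj; rfl
  rw [step1]
  clear step1
  induction m with
  | zero => simp
  | succ m ih =>
    rw [prod_range_succ, prod_range_succ, ← ih]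
    have h1 : ∀ i ∈ range m, (∏ j ∈ Ico (i+1) (m+1), g i j) =
        (∏ j ∈ Ico (i+1) m, g i j) * g i m := by
      intro i hi
      rw [mem_range] at hi
      exact Finset.prod_Ico_succ_top (by omega) _
    rw [Finset.prod_congr rfl h1, Finset.prod_mul_distrib]
    simp

/-- determinant of the matrix of differences of powers equals a full Vandermonde. -/
lemma det_diff_vandermonde (m : ℕ) (x : Fin (m+1) → K) :
    Matrix.det (Matrix.of fun i j : Fin m =>
        x i.succ ^ ((j : ℕ)+1) - x i.castSucc ^ ((j : ℕ)+1)) =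
      ∏ i : Fin (m+1), ∏ j ∈ Ioi i, (x j - x i) := by
  classical
  set V : Matrix (Fin (m+1)) (Fin (m+1)) K := Matrix.vandermonde x with hV
  set L : Matrix (Fin (m+1)) (Fin (m+1)) K :=
    Matrix.of (fun i k : Fin (m+1) =>
      if i = k then (1:K) else if (k : ℕ) + 1 = (i : ℕ) then -1 else 0) with hL
  have hLsplit : ∀ i k : Fin (m+1),
      L i k = (if i = k then (1:K) else 0) + (if (k : ℕ) + 1 = (i : ℕ) then -1 else 0) := by
    intro i k
    by_cases h : i = k
    · subst h
      simp [hL, Nat.succ_ne_self]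
    · simp [hL, h]
  have hLtri : L.BlockTriangular OrderDual.toDual := by
    intro i k hik
    have hik' : i < k := hik
    have h1 : i ≠ k := ne_of_lt hik'
    have h2 : ¬ ((k : ℕ) + 1 = (i : ℕ)) := by
      have : (i : ℕ) < (k : ℕ) := hik'
      omega
    simp [hL, h1, h2]
  have hdetL : L.det = 1 := by
    rw [Matrix.det_of_lowerTriangular L hLtri]
    simp [hL]
  -- entries of L * V
  have hE0 : ∀ j', (L * V) 0 j' = V 0 j' := by
    intro j'
    rw [Matrix.mul_apply]
    rw [Finset.sum_congr rfl fun k _ => by rw [hLsplit 0 k, add_mul]]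
    rw [Finset.sum_add_distrib]
    have e1 : (∑ k, (if (0 : Fin (m+1)) = k then (1:K) else 0) * V k j') = V 0 j' := by
      rw [Finset.sum_congr rfl fun k _ => by rw [ite_mul, one_mul, zero_mul]]
      simp
    have e2 : (∑ k : Fin (m+1), (if (k : ℕ) + 1 = ((0 : Fin (m+1)) : ℕ) then (-1:K) else 0) * V k j') = 0 := by
      refine Finset.sum_eq_zero fun k _ => ?_
      simp
    rw [e1, e2, add_zero]
  have hEs : ∀ (i : Fin m) (j' : Fin (m+1)),
      (L * V) i.succ j' = V i.succ j' - V i.castSucc j' := by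
    intro i j'
    rw [Matrix.mul_apply]
    rw [Finset.sum_congr rfl fun k _ => by rw [hLsplit i.succ k, add_mul]]
    rw [Finset.sum_add_distrib]
    have e1 : (∑ k, (if i.succ = k then (1:K) else 0) * V k j') = V i.succ j' := by
      rw [Finset.sum_congr rfl fun k _ => by rw [ite_mul, one_mul, zero_mul]]
      simp
    have e2 : (∑ k : Fin (m+1), (if (k : ℕ) + 1 = ((i.succ : Fin (m+1)) : ℕ) then (-1:K) else 0) * V k j')
        = - V i.castSucc j' := by
      have hcond : ∀ k : Fin (m+1), ((k : ℕ) + 1 = ((i.succ : Fin (m+1)) : ℕ)) ↔ k = i.castSucc := by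
        intro k
        rw [Fin.val_succ, Fin.ext_iff, Fin.coe_castSucc]
        omega
      rw [Finset.sum_congr rfl fun k _ => by
        rw [show (if (k : ℕ) + 1 = ((i.succ : Fin (m+1)) : ℕ) then (-1:K) else 0) * V k j'
            = if k = i.castSucc then -V k j' else 0 by
          by_cases h : k = i.castSucc
          · rw [if_pos ((hcond k).2 h), if_pos h, neg_one_mul]
          · rw [if_neg (fun hc => h ((hcond k).1 hc)), if_neg h, zero_mul]]]
      simp
    rw [e1, e2]
    ring
  have hdetE : (L * V).det = V.det := by
    rw [Matrix.det_mul, hdetL, one_mul]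
  have hlap := Matrix.det_succ_column_zero (L * V)
  have hcol : ∀ i : Fin (m+1), (L * V) i 0 = if i = 0 then 1 else 0 := by
    intro i
    refine Fin.cases ?_ (fun i0 => ?_) i
    · rw [hE0 0, if_pos rfl]
      simp [hV, Matrix.vandermonde_apply]
    · rw [hEs i0 0, if_neg (Fin.succ_ne_zero i0)]
      simp [hV, Matrix.vandermonde_apply]
  have hsingle : ((L*V)).det = ((L*V).submatrix (Fin.succAbove 0) Fin.succ).det := by
    rw [hlap]
    rw [Finset.sum_eq_single (0 : Fin (m+1))]
    · rw [hcol 0, if_pos rfl]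
      simp
    · intro i _ hi
      rw [hcol i, if_neg hi]
      ring
    · intro h
      exact absurd (Finset.mem_univ _) h
  have hsub : ((L*V).submatrix (Fin.succAbove 0) Fin.succ) =
      Matrix.of (fun i j : Fin m => x i.succ ^ ((j : ℕ)+1) - x i.castSucc ^ ((j : ℕ)+1)) := by
    ext i j
    rw [Matrix.submatrix_apply]
    rw [Fin.succAbove_zero]
    rw [hEs i j.succ]
    simp [hV, Matrix.vandermonde_apply, Fin.val_succ]
  rw [← hsub, ← hsingle, hdetE, hV, Matrix.det_vandermonde]

lemma one_sub_mul_geom (r : K) {A B : ℕ} (h : A ≤ B) :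
    (1 - r) * ∑ s ∈ Ico A B, r ^ s = r ^ A - r ^ B := by
  rw [Finset.sum_Ico_eq_sum_range]
  rw [Finset.sum_congr rfl fun i _ => pow_add r A i, ← Finset.mul_sum]
  have hg := geom_sum_mul r (B - A)
  have h2 : (1 - r) * ∑ i ∈ range (B-A), r ^ i = 1 - r ^ (B - A) := by
    linear_combination -hg
  calc (1 - r) * (r ^ A * ∑ i ∈ range (B-A), r ^ i)
      = r ^ A * ((1 - r) * ∑ i ∈ range (B-A), r ^ i) := by ring
    _ = r ^ A * (1 - r ^ (B - A)) := by rw [h2]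
    _ = r ^ A - r ^ A * r ^ (B - A) := by ring
    _ = r ^ A - r ^ B := by rw [← pow_add, Nat.add_sub_cancel' h]


def PSden (m : ℕ) : K := ∏ j ∈ range m, ∏ i ∈ range j, (1 - q ^ (j - i))

lemma PSden_ne_zero (m : ℕ) : PSden m ≠ 0 := by
  refine Finset.prod_ne_zero_iff.2 fun j hj => Finset.prod_ne_zero_iff.2 fun i hi => ?_
  rw [mem_range] at hi
  exact one_sub_q_pow_ne_zero (by omega)

def dd (m : ℕ) : ℕ := ∑ j ∈ range m, j * (m - 1 - j)

def PSform (m : ℕ) (lam : ℕ → ℕ) : K :=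
  q ^ (∑ i ∈ range m, i * lam i) *
    ∏ j ∈ range m, ∏ i ∈ range j, ((1 - q ^ (lam i + j - (lam j + i))) / (1 - q ^ (j - i)))

lemma psform_eq (m : ℕ) (lam : ℕ → ℕ) (hdec : ∀ i j, i ≤ j → lam j ≤ lam i) :
    PSform m lam =
      (∏ i : Fin m, ∏ j ∈ Ioi i,
          (q ^ (lam (j:ℕ) + (m - 1 - (j:ℕ))) - q ^ (lam (i:ℕ) + (m - 1 - (i:ℕ)))))
        / (q ^ dd m * PSden m) := by
  rw [prod_pairs m (fun i j => q ^ (lam j + (m - 1 - j)) - q ^ (lam i + (m - 1 - i)))]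
  unfold PSform
  -- pointwise rewrite of each factor
  have hpt : ∀ j ∈ range m, ∀ i ∈ range j,
      (1 - q ^ (lam i + j - (lam j + i))) / (1 - q ^ (j - i)) =
      (q ^ (lam j + (m - 1 - j)) - q ^ (lam i + (m - 1 - i)))
        / (q ^ (lam j + (m - 1 - j)) * (1 - q ^ (j - i))) := by
    intro j hj i hi
    rw [mem_range] at hj hi
    have hd := hdec i j hi.le
    have hexp : lam i + j - (lam j + i) = (lam i + (m-1-i)) - (lam j + (m-1-j)) := by omega
    have hle2 : lam j + (m-1-j) ≤ lam i + (m-1-i) := by omega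
    rw [hexp, pow_sub₀ _ q_ne_zero hle2, ← div_eq_mul_inv]
    rw [one_sub_div (q_pow_ne_zero (lam j + (m-1-j)))]
    rw [div_div]
  rw [Finset.prod_congr rfl fun j hj => Finset.prod_congr rfl (hpt j hj)]
  -- split the products of quotients
  rw [Finset.prod_congr rfl fun j _ => Finset.prod_div_distrib _ _, Finset.prod_div_distrib]
  -- compute the denominator product
  have hden : (∏ j ∈ range m, ∏ i ∈ range j,
      (q ^ (lam j + (m - 1 - j)) * (1 - q ^ (j - i)))) =
      q ^ (∑ j ∈ range m, (lam j + (m - 1 - j)) * j) * PSden m := by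
    rw [Finset.prod_congr rfl fun j _ => Finset.prod_mul_distrib]
    rw [Finset.prod_mul_distrib]
    unfold PSden
    congr 1
    rw [Finset.prod_congr rfl fun j _ => Finset.prod_const _]
    rw [Finset.prod_congr rfl fun j (hj : j ∈ range m) => by
      rw [Finset.card_range, ← pow_mul]]
    rw [Finset.prod_pow_eq_pow_sum]
  rw [hden]
  -- now pure power algebra
  have hsum : (∑ j ∈ range m, (lam j + (m - 1 - j)) * j) =
      (∑ i ∈ range m, i * lam i) + dd m := by
    unfold dd
    rw [← Finset.sum_add_distrib]
    refine Finset.sum_congr rfl fun j _ => by ring_nf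
  rw [hsum, pow_add, mul_div_assoc']
  rw [mul_assoc (q ^ ∑ i ∈ range m, i * lam i) (q ^ dd m) (PSden m)]
  exact mul_div_mul_left _ _ (q_pow_ne_zero _)


def ext (m : ℕ) (t : Fin m → ℕ) : ℕ → ℕ := fun i => if h : i < m then t ⟨i, h⟩ else 0

def BB (m : ℕ) (lam : ℕ → ℕ) : Finset (Fin m → ℕ) :=
  Fintype.piFinset fun i => Finset.Icc (lam ((i : ℕ)+1)) (lam (i : ℕ))

lemma mem_BB {m : ℕ} {lam : ℕ → ℕ} {t : Fin m → ℕ} :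
    t ∈ BB m lam ↔ ∀ i : Fin m, lam ((i:ℕ)+1) ≤ t i ∧ t i ≤ lam (i:ℕ) := by
  unfold BB
  rw [Fintype.mem_piFinset]
  simp [Finset.mem_Icc]

lemma ext_coe {m : ℕ} (t : Fin m → ℕ) (k : Fin m) : ext m t (k : ℕ) = t k := by
  unfold ext
  rw [dif_pos k.isLt]

lemma ext_zero {m : ℕ} (t : Fin m → ℕ) {i : ℕ} (h : m ≤ i) : ext m t i = 0 := by
  unfold ext
  rw [dif_neg (by omega)]

lemma ext_dec {m : ℕ} {lam : ℕ → ℕ} {t : Fin m → ℕ}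
    (hdec : ∀ i j, i ≤ j → lam j ≤ lam i) (ht : t ∈ BB m lam) :
    ∀ i j, i ≤ j → ext m t j ≤ ext m t i := by
  intro i j hij
  rw [mem_BB] at ht
  by_cases hj : j < m
  · have hi : i < m := lt_of_le_of_lt hij hj
    rw [ext, dif_pos hj, ext, dif_pos hi]
    rcases Nat.eq_or_lt_of_le hij with h | h
    · subst h; rfl
    · calc t ⟨j, hj⟩ ≤ lam j := (ht ⟨j, hj⟩).2
        _ ≤ lam (i+1) := hdec _ _ (by omega)
        _ ≤ t ⟨i, hi⟩ := (ht ⟨i, hi⟩).1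
  · rw [ext_zero t (by omega)]
    exact Nat.zero_le _

def U : ℕ → (ℕ → ℕ) → K
  | 0, _ => 1
  | (m+1), lam => ∑ t ∈ BB m lam, q ^ (∑ i, t i) * U m (ext m t)

lemma det_pow_succ (m : ℕ) (z : Fin m → K) :
    Matrix.det (Matrix.of fun i j : Fin m => z i ^ ((j:ℕ)+1)) =
      (∏ i, z i) * ∏ i : Fin m, ∏ j ∈ Ioi i, (z j - z i) := by
  have h : (Matrix.of fun i j : Fin m => z i ^ ((j:ℕ)+1)) =
      Matrix.of fun i j => z i * (Matrix.vandermonde z) i j := by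
    ext i j
    rw [Matrix.of_apply, Matrix.of_apply, Matrix.vandermonde_apply, ← pow_succ']
  rw [h, Matrix.det_mul_column, Matrix.det_vandermonde]

lemma dd_succ (m : ℕ) : dd (m+1) = dd m + ∑ i ∈ range m, (m-1-i) := by
  unfold dd
  rw [Finset.sum_range_succ' (fun j => j * (m + 1 - 1 - j)) m]
  have h1 : ∀ j ∈ range m, (j+1) * (m + 1 - 1 - (j+1)) = j * (m-1-j) + (m-1-j) := by
    intro j hj
    rw [mem_range] at hj
    have : m + 1 - 1 - (j+1) = m - 1 - j := by omega
    rw [this]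
    ring
  rw [Finset.sum_congr rfl h1, Finset.sum_add_distrib]
  simp

lemma PSden_succ (m : ℕ) :
    PSden (m+1) = PSden m * ∏ j ∈ range m, (1 - q ^ (j+1)) := by
  unfold PSden
  rw [Finset.prod_range_succ]
  congr 1
  rw [← Finset.prod_range_reflect (fun j => 1 - q ^ (j+1)) m]
  refine Finset.prod_congr rfl fun i hi => ?_
  rw [mem_range] at hi
  congr 2
  omega

lemma key_step (m : ℕ) (lam : ℕ → ℕ) (hdec : ∀ i j, i ≤ j → lam j ≤ lam i)
    (hsupp : ∀ i, m + 1 ≤ i → lam i = 0) :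
    ∑ t ∈ BB m lam, q ^ (∑ i, t i) * PSform m (ext m t) = PSform (m+1) lam := by
  classical
  set x : Fin (m+1) → K := fun k => q ^ (lam (k:ℕ) + (m - (k:ℕ))) with hx
  set S2 : ℕ := ∑ i ∈ range m, (m - 1 - i) with hS2
  set C : K := q ^ (dd m + S2) * PSden m with hC
  -- Step A : summand = det / C
  have stepA : ∀ t ∈ BB m lam,
      q ^ (∑ i, t i) * PSform m (ext m t) =
        Matrix.det (Matrix.of fun i j : Fin m =>
          (q ^ (t i + (m - 1 - (i:ℕ)))) ^ ((j:ℕ)+1)) / C := by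
    intro t ht
    have hextdec := ext_dec hdec ht
    rw [psform_eq m (ext m t) hextdec]
    have hprod : (∏ i : Fin m, ∏ j ∈ Ioi i,
        (q ^ (ext m t (j:ℕ) + (m - 1 - (j:ℕ))) - q ^ (ext m t (i:ℕ) + (m - 1 - (i:ℕ))))) =
        ∏ i : Fin m, ∏ j ∈ Ioi i,
        (q ^ (t j + (m - 1 - (j:ℕ))) - q ^ (t i + (m - 1 - (i:ℕ)))) := by
      refine Finset.prod_congr rfl fun i _ => Finset.prod_congr rfl fun j _ => ?_
      rw [ext_coe, ext_coe]
    rw [hprod]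
    rw [det_pow_succ m (fun i => q ^ (t i + (m - 1 - (i:ℕ))))]
    have hz : (∏ i : Fin m, q ^ (t i + (m - 1 - (i:ℕ)))) = q ^ ((∑ i, t i) + S2) := by
      rw [Finset.prod_pow_eq_pow_sum]
      congr 1
      rw [Finset.sum_add_distrib]
      congr 1
      rw [hS2, ← Fin.sum_univ_eq_sum_range (fun i => m - 1 - i) m]
    rw [hz, hC]
    have hW : ∀ (W : K), q ^ (∑ i, t i) * (W / (q ^ dd m * PSden m)) =
        q ^ (∑ i, t i + S2) * W / (q ^ (dd m + S2) * PSden m) := by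
      intro W
      rw [pow_add, pow_add]
      have h1 : (q:K) ^ S2 ≠ 0 := q_pow_ne_zero _
      have h2 : (q:K) ^ dd m ≠ 0 := q_pow_ne_zero _
      have h3 : PSden m ≠ 0 := PSden_ne_zero m
      field_simp
    exact hW _
  rw [Finset.sum_congr rfl stepA, ← Finset.sum_div]
  -- Step B : multilinearity
  have stepB : (∑ t ∈ BB m lam, Matrix.det (Matrix.of fun i j : Fin m =>
      (q ^ (t i + (m - 1 - (i:ℕ)))) ^ ((j:ℕ)+1))) =
      Matrix.det (Matrix.of fun i j : Fin m =>
        ∑ s ∈ Finset.Icc (lam ((i:ℕ)+1)) (lam (i:ℕ)), (q ^ (s + (m - 1 - (i:ℕ)))) ^ ((j:ℕ)+1)) := by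
    have hrows : (fun (i : Fin m) => ∑ s ∈ Finset.Icc (lam ((i:ℕ)+1)) (lam (i:ℕ)),
          (fun j : Fin m => (q ^ (s + (m - 1 - (i:ℕ)))) ^ ((j:ℕ)+1))) =
        (fun (i : Fin m) (j : Fin m) => ∑ s ∈ Finset.Icc (lam ((i:ℕ)+1)) (lam (i:ℕ)),
          (q ^ (s + (m - 1 - (i:ℕ)))) ^ ((j:ℕ)+1)) := by
      funext i j
      exact Finset.sum_apply _ _ _
    have h := (Matrix.detRowAlternating (R := K) (n := Fin m)).toMultilinearMap.map_sum_finset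
      (fun i s => (fun j : Fin m => (q ^ (s + (m - 1 - (i:ℕ)))) ^ ((j:ℕ)+1)))
      (fun i => Finset.Icc (lam ((i:ℕ)+1)) (lam (i:ℕ)))
    simp only [AlternatingMap.coe_multilinearMap] at h
    rw [hrows] at h
    exact h.symm
  rw [stepB]
  -- Step C : evaluate the inner geometric sums
  have stepC : (Matrix.of fun i j : Fin m =>
        ∑ s ∈ Finset.Icc (lam ((i:ℕ)+1)) (lam (i:ℕ)), (q ^ (s + (m - 1 - (i:ℕ)))) ^ ((j:ℕ)+1)) =
      Matrix.of fun i j : Fin m =>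
        (1 - q ^ ((j:ℕ)+1))⁻¹ * (x i.succ ^ ((j:ℕ)+1) - x i.castSucc ^ ((j:ℕ)+1)) := by
    ext i j
    rw [Matrix.of_apply, Matrix.of_apply]
    set r : K := q ^ ((j:ℕ)+1) with hr
    have hrpow : ∀ e : ℕ, (q ^ e) ^ ((j:ℕ)+1) = r ^ e := by
      intro e
      rw [hr, ← pow_mul, ← pow_mul, Nat.mul_comm]
    rw [Finset.sum_congr rfl fun s _ => hrpow (s + (m - 1 - (i:ℕ)))]
    have hik : (i : ℕ) < m := i.isLt
    have hgeom := one_sub_mul_geom r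
      (show lam ((i:ℕ)+1) ≤ lam (i:ℕ) + 1 from
        le_trans (hdec (i:ℕ) ((i:ℕ)+1) (Nat.le_succ _)) (Nat.le_succ _))
    have h1r : (1:K) - r ≠ 0 := one_sub_q_pow_ne_zero (by omega)
    have hicc : Finset.Icc (lam ((i:ℕ)+1)) (lam (i:ℕ)) =
        Finset.Ico (lam ((i:ℕ)+1)) (lam (i:ℕ) + 1) := (Finset.Ico_add_one_right_eq_Icc _ _).symm
    have hsum : (∑ s ∈ Finset.Icc (lam ((i:ℕ)+1)) (lam (i:ℕ)), r ^ (s + (m - 1 - (i:ℕ)))) =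
        (1 - r)⁻¹ * (x i.succ ^ ((j:ℕ)+1) - x i.castSucc ^ ((j:ℕ)+1)) := by
      have e1 : r ^ lam ((i:ℕ)+1) * r ^ (m - 1 - (i:ℕ)) = x i.succ ^ ((j:ℕ)+1) := by
        rw [← pow_add]
        simp only [hx, hr]
        rw [← pow_mul, ← pow_mul]
        congr 1
        have h1 : (i.succ : ℕ) = (i:ℕ) + 1 := rfl
        rw [h1]
        have h2 : m - ((i:ℕ)+1) = m - 1 - (i:ℕ) := by omega
        rw [h2, Nat.mul_comm]
      have e2 : r ^ (lam (i:ℕ) + 1) * r ^ (m - 1 - (i:ℕ)) = x i.castSucc ^ ((j:ℕ)+1) := by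
        rw [← pow_add]
        simp only [hx, hr]
        rw [← pow_mul, ← pow_mul]
        congr 1
        have h1 : (i.castSucc : ℕ) = (i:ℕ) := rfl
        rw [h1]
        have h2 : lam (i:ℕ) + 1 + (m - 1 - (i:ℕ)) = lam (i:ℕ) + (m - (i:ℕ)) := by omega
        rw [← h2, Nat.mul_comm]
      rw [hicc]
      rw [Finset.sum_congr rfl fun s _ => pow_add r s (m - 1 - (i:ℕ))]
      rw [← Finset.sum_mul]
      calc (∑ s ∈ Finset.Ico (lam ((i:ℕ)+1)) (lam (i:ℕ) + 1), r ^ s) * r ^ (m - 1 - (i:ℕ))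
          = (1-r)⁻¹ * ((1-r) * ((∑ s ∈ Finset.Ico (lam ((i:ℕ)+1)) (lam (i:ℕ) + 1), r ^ s) * r ^ (m - 1 - (i:ℕ)))) :=
            (inv_mul_cancel_left₀ h1r _).symm
        _ = (1-r)⁻¹ * (x i.succ ^ ((j:ℕ)+1) - x i.castSucc ^ ((j:ℕ)+1)) := by
            congr 1
            rw [← mul_assoc, hgeom, sub_mul, e1, e2]
    rw [hsum, hr]
  rw [stepC]
  -- Step D : pull out column factors and use the difference Vandermonde
  have stepD : Matrix.det (Matrix.of fun i j : Fin m =>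
        (1 - q ^ ((j:ℕ)+1))⁻¹ * (x i.succ ^ ((j:ℕ)+1) - x i.castSucc ^ ((j:ℕ)+1))) =
      (∏ j ∈ range m, (1 - q ^ (j+1)))⁻¹ * ∏ i : Fin (m+1), ∏ j ∈ Ioi i, (x j - x i) := by
    erw [Matrix.det_mul_row (fun j : Fin m => (1 - q ^ ((j:ℕ)+1))⁻¹)]
    have hdd : (Matrix.det fun i j : Fin m => x i.succ ^ ((j:ℕ)+1) - x i.castSucc ^ ((j:ℕ)+1)) =
        ∏ i : Fin (m+1), ∏ j ∈ Ioi i, (x j - x i) := det_diff_vandermonde m x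
    rw [hdd]
    congr 1
    rw [← Finset.prod_inv_distrib]
    rw [← Fin.prod_univ_eq_prod_range (fun j => (1 - q ^ (j+1))⁻¹) m]
  rw [stepD]
  -- Step E : final assembly
  rw [psform_eq (m+1) lam hdec]
  have hxeq : (∏ i : Fin (m+1), ∏ j ∈ Ioi i,
      (q ^ (lam (j:ℕ) + (m + 1 - 1 - (j:ℕ))) - q ^ (lam (i:ℕ) + (m + 1 - 1 - (i:ℕ))))) =
      ∏ i : Fin (m+1), ∏ j ∈ Ioi i, (x j - x i) := by
    refine Finset.prod_congr rfl fun i _ => Finset.prod_congr rfl fun j _ => ?_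
    rw [hx]
    congr 3 <;> omega
  rw [hxeq]
  rw [hC, dd_succ m, PSden_succ m]
  have hP : (∏ j ∈ range m, (1 - q ^ (j+1))) ≠ 0 := by
    refine Finset.prod_ne_zero_iff.2 fun j _ => one_sub_q_pow_ne_zero (by omega)
  have h2 : (q:K) ^ (dd m + S2) ≠ 0 := q_pow_ne_zero _
  have h3 : PSden m ≠ 0 := PSden_ne_zero m
  have hS2dd : dd m + ∑ i ∈ range m, (m - 1 - i) = dd m + S2 := by rw [hS2]
  rw [hS2dd]
  field_simp

lemma U_eq_PSform : ∀ (m : ℕ) (lam : ℕ → ℕ),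
    (∀ i j, i ≤ j → lam j ≤ lam i) → (∀ i, m ≤ i → lam i = 0) →
    U m lam = PSform m lam := by
  intro m
  induction m with
  | zero =>
    intro lam _ _
    show (1 : K) = PSform 0 lam
    unfold PSform
    simp
  | succ m ih =>
    intro lam hdec hsupp
    show (∑ t ∈ BB m lam, q ^ (∑ i, t i) * U m (ext m t)) = PSform (m+1) lam
    rw [Finset.sum_congr rfl fun t ht => by
      rw [ih (ext m t) (ext_dec hdec ht) (fun i hi => ext_zero t hi)]]
    exact key_step m lam hdec hsupp


def IsChain (m : ℕ) (lam : ℕ → ℕ) (f : ℕ → ℕ → ℕ) : Prop :=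
  (∀ i, f 0 i ≤ lam i) ∧ (∀ k i, f (k+1) i ≤ f k i) ∧
  (∀ i, lam (i+1) ≤ f 0 i) ∧ (∀ k i, f k (i+1) ≤ f (k+1) i) ∧
  (∀ k i, m ≤ k + i + 1 → f k i = 0)

lemma chain_le0 {m lam f} (hf : IsChain m lam f) : ∀ k i, f k i ≤ f 0 i := by
  intro k
  induction k with
  | zero => intro i; exact le_rfl
  | succ k ih => intro i; exact le_trans (hf.2.1 k i) (ih i)

lemma chain_mono {m lam f} (hf : IsChain m lam f) : ∀ p k i, p ≤ k → f k i ≤ f p i := by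
  intro p k
  induction k with
  | zero => intro i h; have : p = 0 := by omega
            subst this; exact le_rfl
  | succ k ih =>
    intro i h
    rcases Nat.eq_or_lt_of_le h with h1 | h1
    · subst h1; exact le_rfl
    · exact le_trans (hf.2.1 k i) (ih i (by omega))

lemma chain_le_lam {m lam f} (hf : IsChain m lam f) : ∀ k i, f k i ≤ lam i :=
  fun k i => le_trans (chain_le0 hf k i) (hf.1 i)

lemma chain_lb {m lam f} (hf : IsChain m lam f) : ∀ k i, lam (i + k + 1) ≤ f k i := by
  intro k
  induction k with
  | zero => intro i; exact hf.2.2.1 i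
  | succ k ih =>
    intro i
    calc lam (i + (k+1) + 1) = lam ((i+1) + k + 1) := by ring_nf
      _ ≤ f k (i+1) := ih (i+1)
      _ ≤ f (k+1) i := hf.2.2.2.1 k i

lemma chain_shift {m lam f} (hf : IsChain m lam f) : ∀ d k i, f k (i + d) ≤ f (k + d) i := by
  intro d
  induction d with
  | zero => intro k i; exact le_rfl
  | succ d ih =>
    intro k i
    calc f k (i + (d+1)) = f k ((i + d) + 1) := by ring_nf
      _ ≤ f (k+1) (i + d) := hf.2.2.2.1 k (i + d)
      _ ≤ f ((k+1) + d) i := ih (k+1) i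
      _ = f (k + (d+1)) i := by ring_nf

lemma chain_finite (m : ℕ) (lam : ℕ → ℕ) : {f : ℕ → ℕ → ℕ | IsChain m lam f}.Finite := by
  classical
  haveI : Finite ↑{f : ℕ → ℕ → ℕ | IsChain m lam f} := by
    apply Finite.of_injective
      (fun f : {f : ℕ → ℕ → ℕ // IsChain m lam f} =>
        (fun (k : Fin m) (i : Fin m) =>
          (⟨f.1 (k:ℕ) (i:ℕ), Nat.lt_succ_of_le (chain_le_lam f.2 (k:ℕ) (i:ℕ))⟩ :
            Fin (lam (i:ℕ) + 1))))
    intro f g hfg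
    apply Subtype.ext
    funext k i
    by_cases hk : k < m ∧ i < m
    · have := congrFun (congrFun hfg ⟨k, hk.1⟩) ⟨i, hk.2⟩
      exact congrArg Fin.val this
    · have h1 : m ≤ k + i + 1 := by omega
      rw [f.2.2.2.2.2 k i h1, g.2.2.2.2.2 k i h1]
  exact Set.toFinite _

def Ch (m : ℕ) (lam : ℕ → ℕ) : Finset (ℕ → ℕ → ℕ) := (chain_finite m lam).toFinset

lemma mem_Ch {m lam f} : f ∈ Ch m lam ↔ IsChain m lam f := Set.Finite.mem_toFinset _

def wt (m : ℕ) (f : ℕ → ℕ → ℕ) : ℕ := ∑ k ∈ range m, ∑ i ∈ range m, f k i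

def cons (m : ℕ) (t : Fin m → ℕ) (f : ℕ → ℕ → ℕ) : ℕ → ℕ → ℕ :=
  fun k i => if k = 0 then ext m t i else f (k-1) i

lemma U_eq_chain_sum : ∀ (m : ℕ) (lam : ℕ → ℕ),
    (∀ i j, i ≤ j → lam j ≤ lam i) → (∀ i, m ≤ i → lam i = 0) →
    U m lam = ∑ f ∈ Ch m lam, q ^ wt m f := by
  intro m
  induction m with
  | zero =>
    intro lam hdec hsupp
    have hch : Ch 0 lam = {fun _ _ => 0} := by
      apply Finset.ext
      intro f
      rw [mem_Ch, Finset.mem_singleton]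
      constructor
      · intro hf
        funext k i
        exact hf.2.2.2.2 k i (by omega)
      · intro hf
        subst hf
        refine ⟨fun i => Nat.zero_le _, fun k i => le_rfl,
          fun i => by rw [hsupp (i+1) (by omega)], fun k i => le_rfl, fun k i _ => rfl⟩
    rw [hch]
    show (1 : K) = _
    rw [Finset.sum_singleton]
    unfold wt
    simp
  | succ m ih =>
    intro lam hdec hsupp
    show (∑ t ∈ BB m lam, q ^ (∑ i, t i) * U m (ext m t)) = _
    have hstep : ∀ t ∈ BB m lam,
        q ^ (∑ i, t i) * U m (ext m t) = ∑ f ∈ Ch m (ext m t), q ^ ((∑ i, t i) + wt m f) := by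
      intro t ht
      have hextdec : ∀ i j, i ≤ j → ext m t j ≤ ext m t i := by
        intro i j hij
        by_cases hj : j < m
        · have hi : i < m := lt_of_le_of_lt hij hj
          rw [ext, dif_pos hj, ext, dif_pos hi]
          rcases Nat.eq_or_lt_of_le hij with h | h
          · subst h; rfl
          · calc t ⟨j, hj⟩ ≤ lam j := ((mem_BB).1 ht ⟨j, hj⟩).2
              _ ≤ lam (i+1) := hdec _ _ (by omega)
              _ ≤ t ⟨i, hi⟩ := ((mem_BB).1 ht ⟨i, hi⟩).1
        · rw [ext_zero t (by omega)]
          exact Nat.zero_le _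
      rw [ih (ext m t) hextdec (fun i hi => ext_zero t hi)]
      rw [Finset.mul_sum]
      exact Finset.sum_congr rfl fun f _ => by rw [← pow_add]
    rw [Finset.sum_congr rfl hstep]
    rw [Finset.sum_sigma']
    refine Finset.sum_bij' (fun p _ => cons m p.1 p.2)
      (fun g _ => (⟨fun i : Fin m => g 0 (i:ℕ), fun k i => g (k+1) i⟩ :
        Σ _t : Fin m → ℕ, ℕ → ℕ → ℕ)) ?_ ?_ ?_ ?_ ?_
    -- hi : cons maps into Ch (m+1) lam
    · rintro ⟨t, f⟩ hp
      rw [Finset.mem_sigma] at hp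
      obtain ⟨ht, hf⟩ := hp
      rw [mem_Ch] at hf
      rw [mem_Ch]
      have hBB := (mem_BB).1 ht
      refine ⟨?_, ?_, ?_, ?_, ?_⟩
      · intro i
        show (if (0:ℕ) = 0 then ext m t i else _) ≤ lam i
        rw [if_pos rfl]
        by_cases hi : i < m
        · rw [ext, dif_pos hi]; exact (hBB ⟨i, hi⟩).2
        · rw [ext_zero t (by omega)]; exact Nat.zero_le _
      · intro k i
        cases k with
        | zero =>
          show (if (1:ℕ) = 0 then _ else f 0 i) ≤ (if (0:ℕ) = 0 then ext m t i else _)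
          rw [if_neg one_ne_zero, if_pos rfl]
          exact hf.1 i
        | succ k =>
          show (if k+2 = 0 then _ else f (k+2-1) i) ≤ (if k+1 = 0 then _ else f (k+1-1) i)
          rw [if_neg (by omega), if_neg (by omega)]
          show f (k+1) i ≤ f k i
          exact hf.2.1 k i
      · intro i
        show lam (i+1) ≤ (if (0:ℕ) = 0 then ext m t i else _)
        rw [if_pos rfl]
        by_cases hi : i < m
        · rw [ext, dif_pos hi]; exact (hBB ⟨i, hi⟩).1
        · rw [ext_zero t (by omega), hsupp (i+1) (by omega)]
      · intro k i
        cases k with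
        | zero =>
          show (if (0:ℕ) = 0 then ext m t (i+1) else _) ≤ (if (1:ℕ) = 0 then _ else f 0 i)
          rw [if_pos rfl, if_neg one_ne_zero]
          exact hf.2.2.1 i
        | succ k =>
          show (if k+1 = 0 then _ else f (k+1-1) (i+1)) ≤ (if k+2 = 0 then _ else f (k+2-1) i)
          rw [if_neg (by omega), if_neg (by omega)]
          show f k (i+1) ≤ f (k+1) i
          exact hf.2.2.2.1 k i
      · intro k i hki
        cases k with
        | zero =>
          show (if (0:ℕ) = 0 then ext m t i else _) = 0
          rw [if_pos rfl]
          exact ext_zero t (by omega)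
        | succ k =>
          show (if k+1 = 0 then _ else f (k+1-1) i) = 0
          rw [if_neg (by omega)]
          exact hf.2.2.2.2 k i (by omega)
    -- hj : decomposition maps into the sigma set
    · intro g hg
      rw [mem_Ch] at hg
      rw [Finset.mem_sigma]
      constructor
      · rw [mem_BB]
        intro i
        exact ⟨hg.2.2.1 (i:ℕ), hg.1 (i:ℕ)⟩
      · rw [mem_Ch]
        have hext : ∀ i, ext m (fun i : Fin m => g 0 (i:ℕ)) i = g 0 i := by
          intro i
          by_cases hi : i < m
          · rw [ext, dif_pos hi]
          · rw [ext_zero _ (by omega), hg.2.2.2.2 0 i (by omega)]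
        refine ⟨?_, fun k i => hg.2.1 (k+1) i, ?_, fun k i => hg.2.2.2.1 (k+1) i, ?_⟩
        · intro i
          rw [hext i]
          exact hg.2.1 0 i
        · intro i
          rw [hext (i+1)]
          exact hg.2.2.2.1 0 i
        · intro k i hki
          exact hg.2.2.2.2 (k+1) i (by omega)
    -- left_inv
    · rintro ⟨t, f⟩ hp
      rw [Finset.mem_sigma] at hp
      obtain ⟨ht, hf⟩ := hp
      rw [mem_Ch] at hf
      have h1 : (fun i : Fin m => cons m t f 0 (i:ℕ)) = t := by
        funext i
        show (if (0:ℕ) = 0 then ext m t (i:ℕ) else _) = t i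
        rw [if_pos rfl, ext_coe]
      have h2 : (fun k i => cons m t f (k+1) i) = f := by
        funext k i
        show (if k+1 = 0 then _ else f (k+1-1) i) = f k i
        rw [if_neg (by omega), Nat.add_sub_cancel]
      show (⟨fun i : Fin m => cons m t f 0 (i:ℕ), fun k i => cons m t f (k+1) i⟩ :
          Σ _t : Fin m → ℕ, ℕ → ℕ → ℕ) = ⟨t, f⟩
      rw [h1, h2]
    -- right_inv
    · intro g hg
      rw [mem_Ch] at hg
      funext k i
      cases k with
      | zero =>
        show (if (0:ℕ) = 0 then ext m (fun i : Fin m => g 0 (i:ℕ)) i else _) = g 0 i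
        rw [if_pos rfl]
        by_cases hi : i < m
        · rw [ext, dif_pos hi]
        · rw [ext_zero _ (by omega), hg.2.2.2.2 0 i (by omega)]
      | succ k =>
        show (if k+1 = 0 then _ else g (k+1-1+1) i) = g (k+1) i
        rw [if_neg (by omega), Nat.add_sub_cancel]
    -- values
    · rintro ⟨t, f⟩ hp
      rw [Finset.mem_sigma] at hp
      obtain ⟨ht, hf⟩ := hp
      rw [mem_Ch] at hf
      congr 1
      simp only [wt]
      rw [Finset.sum_range_succ' (fun k => ∑ i ∈ range (m+1), cons m t f k i) m]
      have ha : ∀ k ∈ range m, (∑ i ∈ range (m+1), cons m t f (k+1) i) = ∑ i ∈ range m, f k i := by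
        intro k hk
        have hc : ∀ i, cons m t f (k+1) i = f k i := by
          intro i
          show (if k+1 = 0 then _ else f (k+1-1) i) = f k i
          rw [if_neg (by omega), Nat.add_sub_cancel]
        rw [Finset.sum_congr rfl fun i _ => hc i]
        rw [Finset.sum_range_succ]
        have h0 : f k m = 0 := hf.2.2.2.2 k m (by omega)
        rw [h0, add_zero]
      have hb : (∑ i ∈ range (m+1), cons m t f 0 i) = ∑ i, t i := by
        have hc : ∀ i, cons m t f 0 i = ext m t i := fun i => if_pos rfl
        rw [Finset.sum_congr rfl fun i _ => hc i]
        rw [Finset.sum_range_succ, ext_zero t le_rfl, add_zero]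
        rw [← Fin.sum_univ_eq_sum_range (fun i => ext m t i) m]
        exact Finset.sum_congr rfl fun i _ => ext_coe t i
      rw [Finset.sum_congr rfl ha, hb]
      omega


lemma count_le_iff {g : ℕ → ℕ} (hg : ∀ p q, p ≤ q → g q ≤ g p) {N j : ℕ} (hj : j < N) (k : ℕ) :
    k ≤ g j ↔ j < #((range N).filter fun x => k ≤ g x) := by
  classical
  constructor
  · intro h
    have hsub : range (j+1) ⊆ (range N).filter fun x => k ≤ g x := by
      intro x hx
      rw [mem_range] at hx
      rw [mem_filter, mem_range]
      exact ⟨by omega, le_trans h (hg x j (by omega))⟩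
    have := Finset.card_le_card hsub
    rw [Finset.card_range] at this
    omega
  · intro h
    by_contra hcon
    push_neg at hcon
    have hsub : ((range N).filter fun x => k ≤ g x) ⊆ range j := by
      intro x hx
      rw [mem_filter] at hx
      rw [mem_range]
      by_contra hx2
      push_neg at hx2
      exact absurd (le_trans hx.2 (hg j x hx2)) (by omega)
    have := Finset.card_le_card hsub
    rw [Finset.card_range] at this
    omega

lemma count_thresh (N v : ℕ) : #((range N).filter fun x => x + 1 ≤ v) = min v N := by
  classical
  have h : (range N).filter (fun x => x + 1 ≤ v) = range (min v N) := by
    apply Finset.ext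
    intro x
    rw [mem_filter, mem_range, mem_range]
    omega
  rw [h, Finset.card_range]

-- plane partitions

lemma pp_finite (a b c : ℕ) : {π : Fin a → Fin b → ℕ | IsBoxedPP a b c π}.Finite := by
  classical
  haveI : Finite ↑{π : Fin a → Fin b → ℕ | IsBoxedPP a b c π} := by
    apply Finite.of_injective
      (fun p : {π : Fin a → Fin b → ℕ // IsBoxedPP a b c π} =>
        (fun (i : Fin a) (j : Fin b) => (⟨p.1 i j, Nat.lt_succ_of_le (p.2.1 i j)⟩ : Fin (c+1))))
    intro p p' hpp
    apply Subtype.ext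
    funext i j
    exact congrArg Fin.val (congrFun (congrFun hpp i) j)
  exact Set.toFinite _

def Pfin (a b c : ℕ) : Finset (Fin a → Fin b → ℕ) := (pp_finite a b c).toFinset

lemma mem_Pfin {a b c : ℕ} {π : Fin a → Fin b → ℕ} :
    π ∈ Pfin a b c ↔ IsBoxedPP a b c π := Set.Finite.mem_toFinset _

def rect (a b : ℕ) : ℕ → ℕ := fun i => if i < a then b else 0

lemma rect_dec (a b : ℕ) : ∀ i j, i ≤ j → rect a b j ≤ rect a b i := by
  intro i j hij
  unfold rect
  split_ifs with h1 h2 h2 <;> omega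

lemma rect_supp (a b c : ℕ) : ∀ i, a + c ≤ i → rect a b i = 0 := by
  intro i hi
  unfold rect
  rw [if_neg (by omega)]

def pe (a b : ℕ) (π : Fin a → Fin b → ℕ) : ℕ → ℕ → ℕ :=
  fun i j => if h : i < a ∧ j < b then π ⟨i, h.1⟩ ⟨j, h.2⟩ else 0

def Fm (a b : ℕ) (π : Fin a → Fin b → ℕ) : ℕ → ℕ → ℕ :=
  fun k i => #((range b).filter fun j => k + 1 ≤ pe a b π i j + (a - 1 - i))

def Gm (a b c : ℕ) (f : ℕ → ℕ → ℕ) : Fin a → Fin b → ℕ :=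
  fun i j => #((range (a+c)).filter fun k => (j:ℕ) + 1 ≤ f k (i:ℕ)) - (a - 1 - (i:ℕ))

section PP
variable {a b c : ℕ} {π : Fin a → Fin b → ℕ}

lemma pe_le_c (hπ : IsBoxedPP a b c π) (i j : ℕ) : pe a b π i j ≤ c := by
  unfold pe
  split_ifs with h
  · exact hπ.1 _ _
  · exact Nat.zero_le _

lemma pe_row_dec (hπ : IsBoxedPP a b c π) (i : ℕ) :
    ∀ p p', p ≤ p' → pe a b π i p' ≤ pe a b π i p := by
  intro p p' hpp
  unfold pe
  by_cases h' : i < a ∧ p' < b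
  · rw [dif_pos h', dif_pos ⟨h'.1, by omega⟩]
    exact hπ.2.2 _ _ _ (by rwa [Fin.mk_le_mk])
  · rw [dif_neg h']
    exact Nat.zero_le _

lemma pe_col_dec (hπ : IsBoxedPP a b c π) (j : ℕ) :
    ∀ p p', p ≤ p' → pe a b π p' j ≤ pe a b π p j := by
  intro p p' hpp
  unfold pe
  by_cases h' : p' < a ∧ j < b
  · rw [dif_pos h', dif_pos ⟨by omega, h'.2⟩]
    exact hπ.2.1 _ _ _ (by rwa [Fin.mk_le_mk])
  · rw [dif_neg h']
    exact Nat.zero_le _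

lemma Fm_zero {k i : ℕ} (hi : a ≤ i) : Fm a b π k i = 0 := by
  unfold Fm
  rw [Finset.card_eq_zero, Finset.filter_eq_empty_iff]
  intro j _
  unfold pe
  rw [dif_neg (by omega)]
  omega

lemma Fm_chain (hπ : IsBoxedPP a b c π) : IsChain (a+c) (rect a b) (Fm a b π) := by
  classical
  refine ⟨?_, ?_, ?_, ?_, ?_⟩
  · intro i
    by_cases hi : i < a
    · unfold rect
      rw [if_pos hi]
      calc Fm a b π 0 i ≤ #(range b) := Finset.card_le_card (Finset.filter_subset _ _)
        _ = b := Finset.card_range b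
    · rw [Fm_zero (by omega)]
      exact Nat.zero_le _
  · intro k i
    apply Finset.card_le_card
    intro j hj
    rw [mem_filter] at hj ⊢
    exact ⟨hj.1, by omega⟩
  · intro i
    by_cases hi : i + 1 < a
    · unfold rect
      rw [if_pos hi]
      have hsub : range b ⊆ (range b).filter fun j => 0 + 1 ≤ pe a b π i j + (a - 1 - i) := by
        intro j hj
        rw [mem_filter]
        exact ⟨hj, by omega⟩
      calc b = #(range b) := (Finset.card_range b).symm
        _ ≤ _ := Finset.card_le_card hsub
    · unfold rect
      rw [if_neg (by omega)]
      exact Nat.zero_le _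
  · intro k i
    by_cases hi : i + 1 < a
    · apply Finset.card_le_card
      intro j hj
      rw [mem_filter, mem_range] at hj
      rw [mem_filter, mem_range]
      refine ⟨by omega, ?_⟩
      have h1 : pe a b π (i+1) j ≤ pe a b π i j := pe_col_dec hπ j i (i+1) (by omega)
      omega
    · rw [Fm_zero (a := a) (by omega)]
      exact Nat.zero_le _
  · intro k i hki
    by_cases hi : i < a
    · unfold Fm
      rw [Finset.card_eq_zero, Finset.filter_eq_empty_iff]
      intro j _
      have h1 : pe a b π i j ≤ c := pe_le_c hπ i j
      omega
    · exact Fm_zero (by omega)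

lemma Fm_wt (hπ : IsBoxedPP a b c π) :
    wt (a+c) (Fm a b π) = (∑ i, ∑ j, π i j) + b * ∑ i ∈ range a, (a - 1 - i) := by
  classical
  unfold wt
  rw [Finset.sum_comm]
  have hz : ∀ i ∈ range (a+c), i ∉ range a → (∑ k ∈ range (a+c), Fm a b π k i) = 0 := by
    intro i _ hi
    rw [mem_range] at hi
    exact Finset.sum_eq_zero fun k _ => Fm_zero (by omega)
  rw [← Finset.sum_subset (Finset.range_subset_range.2 (by omega : a ≤ a + c)) hz]
  have hrow : ∀ i ∈ range a,
      (∑ k ∈ range (a+c), Fm a b π k i) = (∑ j ∈ range b, pe a b π i j) + b * (a - 1 - i) := by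
    intro i hi
    rw [mem_range] at hi
    unfold Fm
    rw [Finset.sum_congr rfl fun k _ => Finset.card_filter _ _]
    rw [Finset.sum_comm]
    have hcol : ∀ j ∈ range b,
        (∑ k ∈ range (a+c), if k + 1 ≤ pe a b π i j + (a - 1 - i) then 1 else 0) =
          pe a b π i j + (a - 1 - i) := by
      intro j _
      rw [← Finset.card_filter]
      rw [count_thresh]
      have := pe_le_c hπ i j
      omega
    rw [Finset.sum_congr rfl hcol, Finset.sum_add_distrib]
    congr 1
    rw [Finset.sum_const, Finset.card_range]
    ring
  rw [Finset.sum_congr rfl hrow, Finset.sum_add_distrib]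
  congr 1
  · rw [← Fin.sum_univ_eq_sum_range (fun i => ∑ j ∈ range b, pe a b π i j) a]
    refine Finset.sum_congr rfl fun i _ => ?_
    rw [← Fin.sum_univ_eq_sum_range (fun j => pe a b π (i:ℕ) j) b]
    refine Finset.sum_congr rfl fun j _ => ?_
    unfold pe
    rw [dif_pos ⟨i.isLt, j.isLt⟩]
  · rw [Finset.mul_sum]

end PP

section Chain
variable {a b c : ℕ} {f : ℕ → ℕ → ℕ}

lemma chain_le_b (hf : IsChain (a+c) (rect a b) f) (k i : ℕ) : f k i ≤ b := by
  refine le_trans (chain_le_lam hf k i) ?_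
  unfold rect
  split_ifs <;> omega

lemma count_lb (hf : IsChain (a+c) (rect a b) f) {i j : ℕ} (hi : i < a) (hj : j < b) :
    a - 1 - i ≤ #((range (a+c)).filter fun k => j + 1 ≤ f k i) := by
  classical
  have hsub : range (a-1-i) ⊆ (range (a+c)).filter fun k => j + 1 ≤ f k i := by
    intro k hk
    rw [mem_range] at hk
    rw [mem_filter, mem_range]
    refine ⟨by omega, ?_⟩
    have h1 : rect a b (i + k + 1) ≤ f k i := chain_lb hf k i
    unfold rect at h1
    rw [if_pos (by omega)] at h1
    omega
  have := Finset.card_le_card hsub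
  rwa [Finset.card_range] at this

lemma count_ub (hf : IsChain (a+c) (rect a b) f) {i j : ℕ} (hi : i < a) :
    #((range (a+c)).filter fun k => j + 1 ≤ f k i) ≤ c + (a - 1 - i) := by
  classical
  have hsub : ((range (a+c)).filter fun k => j + 1 ≤ f k i) ⊆ range (c + (a - 1 - i)) := by
    intro k hk
    rw [mem_filter] at hk
    rw [mem_range]
    have h1 : f k i ≠ 0 := by omega
    have h2 : ¬ (a + c ≤ k + i + 1) := fun h => h1 (hf.2.2.2.2 k i h)
    omega
  have := Finset.card_le_card hsub
  rwa [Finset.card_range] at this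

lemma Gm_boxed (hf : IsChain (a+c) (rect a b) f) : IsBoxedPP a b c (Gm a b c f) := by
  classical
  refine ⟨?_, ?_, ?_⟩
  · intro i j
    unfold Gm
    have h1 := count_ub (j := (j:ℕ)) hf i.isLt
    have h2 := count_lb hf i.isLt j.isLt
    omega
  · intro i i' j hii
    unfold Gm
    set d : ℕ := (i':ℕ) - (i:ℕ) with hd
    have hii' : (i:ℕ) ≤ (i':ℕ) := hii
    have key : #((range (a+c)).filter fun k => (j:ℕ) + 1 ≤ f k (i':ℕ)) + d ≤
        #((range (a+c)).filter fun k => (j:ℕ) + 1 ≤ f k (i:ℕ)) := by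
      have hsub : (range d) ∪
          (((range (a+c)).filter fun k => (j:ℕ) + 1 ≤ f k (i':ℕ)).image (· + d)) ⊆
          ((range (a+c)).filter fun k => (j:ℕ) + 1 ≤ f k (i:ℕ)) := by
        intro x hx
        rw [Finset.mem_union] at hx
        rcases hx with hx | hx
        · rw [mem_range] at hx
          rw [mem_filter, mem_range]
          have hia : (i':ℕ) < a := i'.isLt
          refine ⟨by omega, ?_⟩
          have h1 : rect a b ((i:ℕ) + x + 1) ≤ f x (i:ℕ) := chain_lb hf x (i:ℕ)
          unfold rect at h1
          rw [if_pos (by omega)] at h1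
          have := j.isLt
          omega
        · rw [Finset.mem_image] at hx
          obtain ⟨k, hk, rfl⟩ := hx
          rw [mem_filter, mem_range] at hk
          rw [mem_filter, mem_range]
          have h1 : f k ((i:ℕ) + d) ≤ f (k + d) (i:ℕ) := chain_shift hf d k (i:ℕ)
          have h2 : (i:ℕ) + d = (i':ℕ) := by omega
          rw [h2] at h1
          have h3 : f k (i':ℕ) ≠ 0 := by omega
          have h4 : ¬ (a + c ≤ k + (i':ℕ) + 1) := fun h => h3 (hf.2.2.2.2 k _ h)
          exact ⟨by omega, by omega⟩
      have hdisj : Disjoint (range d)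
          (((range (a+c)).filter fun k => (j:ℕ) + 1 ≤ f k (i':ℕ)).image (· + d)) := by
        rw [Finset.disjoint_left]
        intro x hx hx2
        rw [mem_range] at hx
        rw [Finset.mem_image] at hx2
        obtain ⟨k, _, hk2⟩ := hx2
        omega
      have := Finset.card_le_card hsub
      rw [Finset.card_union_of_disjoint hdisj, Finset.card_range,
        Finset.card_image_of_injective _ (add_left_injective d)] at this
      omega
    have hlb' := count_lb (j := (j:ℕ)) hf i'.isLt j.isLt
    have hia : (i':ℕ) < a := i'.isLt
    omega
  · intro i j j' hjj
    unfold Gm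
    have hsub : ((range (a+c)).filter fun k => (j':ℕ) + 1 ≤ f k (i:ℕ)) ⊆
        ((range (a+c)).filter fun k => (j:ℕ) + 1 ≤ f k (i:ℕ)) := by
      intro k hk
      rw [mem_filter] at hk ⊢
      have : (j:ℕ) ≤ (j':ℕ) := hjj
      exact ⟨hk.1, by omega⟩
    have := Finset.card_le_card hsub
    omega

end Chain

section Round
variable {a b c : ℕ}

lemma Gm_Fm (π : Fin a → Fin b → ℕ) (hπ : IsBoxedPP a b c π) : Gm a b c (Fm a b π) = π := by
  classical
  funext i j
  unfold Gm
  have hg : ∀ p p', p ≤ p' →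
      pe a b π (i:ℕ) p' + (a - 1 - (i:ℕ)) ≤ pe a b π (i:ℕ) p + (a - 1 - (i:ℕ)) := by
    intro p p' hpp
    have := pe_row_dec hπ (i:ℕ) p p' hpp
    omega
  have hiff : ∀ k : ℕ, ((j:ℕ) + 1 ≤ Fm a b π k (i:ℕ) ↔
      k + 1 ≤ pe a b π (i:ℕ) (j:ℕ) + (a - 1 - (i:ℕ))) := by
    intro k
    unfold Fm
    constructor
    · intro h
      have := (count_le_iff hg j.isLt (k+1)).2 (by omega)
      omega
    · intro h
      have := (count_le_iff hg j.isLt (k+1)).1 h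
      omega
  have hfe : ((range (a+c)).filter fun k => (j:ℕ) + 1 ≤ Fm a b π k (i:ℕ)) =
      ((range (a+c)).filter fun k => k + 1 ≤ pe a b π (i:ℕ) (j:ℕ) + (a - 1 - (i:ℕ))) := by
    apply Finset.filter_congr
    intro k _
    exact iff_iff_eq.1 (hiff k) ▸ Iff.rfl
  rw [hfe, count_thresh]
  have h1 : pe a b π (i:ℕ) (j:ℕ) ≤ c := pe_le_c hπ _ _
  have h2 : pe a b π (i:ℕ) (j:ℕ) = π i j := by
    unfold pe
    rw [dif_pos ⟨i.isLt, j.isLt⟩]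
  have hia : (i:ℕ) < a := i.isLt
  omega

lemma Fm_Gm (f : ℕ → ℕ → ℕ) (hf : IsChain (a+c) (rect a b) f) : Fm a b (Gm a b c f) = f := by
  classical
  funext k i
  by_cases hi : i < a
  · by_cases hk : k < a + c
    · have hpe : ∀ j, j < b → pe a b (Gm a b c f) i j + (a - 1 - i) =
          #((range (a+c)).filter fun k' => j + 1 ≤ f k' i) := by
        intro j hj
        unfold pe
        rw [dif_pos ⟨hi, hj⟩]
        unfold Gm
        have := count_lb (j := j) hf hi hj
        simp only
        omega
      have hmono : ∀ p p', p ≤ p' → f p' i ≤ f p i := fun p p' hpp => chain_mono hf p p' i hpp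
      have hiff : ∀ j, j < b → (k + 1 ≤ pe a b (Gm a b c f) i j + (a - 1 - i) ↔ j + 1 ≤ f k i) := by
        intro j hj
        rw [hpe j hj]
        constructor
        · intro h
          have := (count_le_iff hmono hk (j+1)).2 (by omega)
          omega
        · intro h
          have := (count_le_iff hmono hk (j+1)).1 h
          omega
      unfold Fm
      have hfe : ((range b).filter fun j => k + 1 ≤ pe a b (Gm a b c f) i j + (a - 1 - i)) =
          ((range b).filter fun j => j + 1 ≤ f k i) := by
        apply Finset.filter_congr
        intro j hj
        rw [mem_range] at hj
        exact iff_iff_eq.1 (hiff j hj) ▸ Iff.rfl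
      rw [hfe, count_thresh]
      have := chain_le_b hf k i
      omega
    · have h0 : f k i = 0 := hf.2.2.2.2 k i (by omega)
      rw [h0]
      unfold Fm
      rw [Finset.card_eq_zero, Finset.filter_eq_empty_iff]
      intro j hj
      rw [mem_range] at hj
      have hpe : pe a b (Gm a b c f) i j + (a - 1 - i) =
          #((range (a+c)).filter fun k' => j + 1 ≤ f k' i) := by
        unfold pe
        rw [dif_pos ⟨hi, hj⟩]
        unfold Gm
        have := count_lb (j := j) hf hi hj
        simp only
        omega
      rw [hpe]
      have hub : #((range (a+c)).filter fun k' => j + 1 ≤ f k' i) ≤ a + c := by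
        calc #((range (a+c)).filter fun k' => j + 1 ≤ f k' i) ≤ #(range (a+c)) :=
          Finset.card_le_card (Finset.filter_subset _ _)
          _ = a + c := Finset.card_range _
      omega
  · rw [Fm_zero (by omega)]
    have h1 : f k i ≤ rect a b i := chain_le_lam hf k i
    unfold rect at h1
    rw [if_neg hi] at h1
    omega

/-- the main combinatorial identity -/
lemma pp_sum_eq_chain_sum (a b c : ℕ) :
    (∑ π ∈ Pfin a b c, q ^ ((∑ i, ∑ j, π i j) + b * ∑ i ∈ range a, (a - 1 - i))) =
      ∑ f ∈ Ch (a+c) (rect a b), q ^ wt (a+c) f := by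
  classical
  refine Finset.sum_bij' (fun π _ => Fm a b π) (fun f _ => Gm a b c f) ?_ ?_ ?_ ?_ ?_
  · intro π hπ
    rw [mem_Pfin] at hπ
    rw [mem_Ch]
    exact Fm_chain hπ
  · intro f hf
    rw [mem_Ch] at hf
    rw [mem_Pfin]
    exact Gm_boxed hf
  · intro π hπ
    rw [mem_Pfin] at hπ
    exact Gm_Fm π hπ
  · intro f hf
    rw [mem_Ch] at hf
    exact Fm_Gm f hf
  · intro π hπ
    rw [mem_Pfin] at hπ
    rw [Fm_wt hπ]

end Round

lemma psform_rect (a b c : ℕ) :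
    PSform (a+c) (rect a b) =
      q ^ (b * ∑ i ∈ range a, i) *
        ∏ r ∈ range c, ∏ i ∈ range a,
          ((1 - q ^ (b + (a + r) - i)) / (1 - q ^ (a + r - i))) := by
  unfold PSform
  congr 1
  · congr 1
    have h1 : ∀ x ∈ range (a+c), x ∉ range a → x * rect a b x = 0 := by
      intro x _ hx
      rw [mem_range] at hx
      unfold rect
      rw [if_neg (by omega), Nat.mul_zero]
    rw [← Finset.sum_subset (Finset.range_subset_range.2 (by omega : a ≤ a + c)) h1]
    rw [Finset.mul_sum]
    refine Finset.sum_congr rfl fun i hi => ?_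
    rw [mem_range] at hi
    unfold rect
    rw [if_pos hi]
    ring
  · rw [Finset.prod_range_add (fun j => ∏ i ∈ range j,
      ((1 - q ^ (rect a b i + j - (rect a b j + i))) / (1 - q ^ (j - i)))) a c]
    have hfirst : (∏ j ∈ range a, ∏ i ∈ range j,
        ((1 - q ^ (rect a b i + j - (rect a b j + i))) / (1 - q ^ (j - i)))) = 1 := by
      refine Finset.prod_eq_one fun j hj => Finset.prod_eq_one fun i hi => ?_
      rw [mem_range] at hj hi
      unfold rect
      rw [if_pos (by omega), if_pos (by omega)]
      rw [show b + j - (b + i) = j - i by omega]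
      exact div_self (one_sub_q_pow_ne_zero (by omega))
    rw [hfirst, one_mul]
    refine Finset.prod_congr rfl fun r hr => ?_
    rw [mem_range] at hr
    rw [Finset.prod_range_add (fun i =>
      ((1 - q ^ (rect a b i + (a + r) - (rect a b (a + r) + i))) / (1 - q ^ ((a + r) - i)))) a r]
    have hsecond : (∏ i ∈ range r,
        ((1 - q ^ (rect a b (a + i) + (a + r) - (rect a b (a + r) + (a + i)))) /
          (1 - q ^ ((a + r) - (a + i))))) = 1 := by
      refine Finset.prod_eq_one fun i hi => ?_
      rw [mem_range] at hi
      unfold rect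
      rw [if_neg (by omega), if_neg (by omega)]
      rw [show 0 + (a + r) - (0 + (a + i)) = (a + r) - (a + i) by omega]
      exact div_self (one_sub_q_pow_ne_zero (by omega))
    rw [hsecond, mul_one]
    refine Finset.prod_congr rfl fun i hi => ?_
    rw [mem_range] at hi
    unfold rect
    rw [if_pos (by omega), if_neg (by omega)]
    rw [show b + (a + r) - (0 + i) = b + (a + r) - i by omega]

-- telescoping

lemma telescope (s r b : ℕ) :
    (∏ t ∈ range b, (1 - q ^ (s+t+r+2))) =
      (∏ t ∈ range b, (1 - q ^ (s+t+r+1))) * ((1 - q ^ (s+b+r+1)) / (1 - q ^ (s+r+1))) := by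
  have h0 : (1:K) - q ^ (s+0+r+1) ≠ 0 := one_sub_q_pow_ne_zero (by omega)
  have key : (∏ t ∈ range b, (1 - q ^ (s+t+r+2))) * (1 - q ^ (s+0+r+1)) =
      ((∏ t ∈ range b, (1 - q ^ (s+t+r+1))) * (1 - q ^ (s+b+r+1))) := by
    have h1 : (∏ t ∈ range (b+1), (1 - q ^ (s+t+r+1))) =
        (∏ t ∈ range b, (1 - q ^ (s+(t+1)+r+1))) * (1 - q ^ (s+0+r+1)) :=
      Finset.prod_range_succ' (fun t => 1 - q ^ (s+t+r+1)) b
    have h2 : (∏ t ∈ range (b+1), (1 - q ^ (s+t+r+1))) =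
        (∏ t ∈ range b, (1 - q ^ (s+t+r+1))) * (1 - q ^ (s+b+r+1)) :=
      Finset.prod_range_succ (fun t => 1 - q ^ (s+t+r+1)) b
    have h3 : ∀ t, s+(t+1)+r+1 = s+t+r+2 := by intro t; omega
    have h4 : (∏ t ∈ range b, (1 - q ^ (s+(t+1)+r+1))) =
        ∏ t ∈ range b, (1 - q ^ (s+t+r+2)) :=
      Finset.prod_congr rfl fun t _ => by rw [h3 t]
    rw [h4] at h1
    rw [← h1, h2]
  rw [show s+0+r+1 = s+r+1 from by omega] at key h0
  rw [eq_comm, ← mul_div_assoc, ← key, mul_div_cancel_right₀ _ h0]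


lemma sum_pp_eq (a b c : ℕ) :
    (∑ π ∈ Pfin a b c, q ^ (∑ i, ∑ j, π i j)) =
      ∏ r ∈ range c, ∏ i ∈ range a, ((1 - q ^ (b + (a + r) - i)) / (1 - q ^ (a + r - i))) := by
  have h1 := pp_sum_eq_chain_sum a b c
  have h2 := U_eq_chain_sum (a+c) (rect a b) (rect_dec a b) (rect_supp a b c)
  have h3 := U_eq_PSform (a+c) (rect a b) (rect_dec a b) (rect_supp a b c)
  have h4 := psform_rect a b c
  have hD : b * ∑ i ∈ range a, (a - 1 - i) = b * ∑ i ∈ range a, i := by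
    congr 1
    exact Finset.sum_range_reflect (fun j => j) a
  have h5 : (∑ π ∈ Pfin a b c, q ^ ((∑ i, ∑ j, π i j) + b * ∑ i ∈ range a, (a-1-i))) =
      (∑ π ∈ Pfin a b c, q ^ (∑ i, ∑ j, π i j)) * q ^ (b * ∑ i ∈ range a, i) := by
    rw [Finset.sum_mul]
    refine Finset.sum_congr rfl fun π _ => ?_
    rw [← pow_add, hD]
  have h6 : (∑ π ∈ Pfin a b c, q ^ (∑ i, ∑ j, π i j)) * q ^ (b * ∑ i ∈ range a, i) =
      (∏ r ∈ range c, ∏ i ∈ range a,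
        ((1 - q ^ (b + (a + r) - i)) / (1 - q ^ (a + r - i)))) * q ^ (b * ∑ i ∈ range a, i) := by
    rw [← h5, h1, ← h2, h3, h4]
    ring
  exact mul_right_cancel₀ (q_pow_ne_zero _) h6

lemma ratfunc_main (a b c : ℕ) :
    (∑ π ∈ Pfin a b c, q ^ (∑ i, ∑ j, π i j)) *
      (∏ s ∈ range a, ∏ t ∈ range b, ∏ r ∈ range c, (1 - q ^ (s+t+r+1))) =
      ∏ s ∈ range a, ∏ t ∈ range b, ∏ r ∈ range c, (1 - q ^ (s+t+r+2)) := by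
  have hsw1 : (∏ s ∈ range a, ∏ t ∈ range b, ∏ r ∈ range c, (1 - q ^ (s+t+r+1))) =
      ∏ s ∈ range a, ∏ r ∈ range c, ∏ t ∈ range b, (1 - q ^ (s+t+r+1)) :=
    Finset.prod_congr rfl fun s _ => Finset.prod_comm
  have hsw2 : (∏ s ∈ range a, ∏ t ∈ range b, ∏ r ∈ range c, (1 - q ^ (s+t+r+2))) =
      ∏ s ∈ range a, ∏ r ∈ range c, ∏ t ∈ range b, (1 - q ^ (s+t+r+2)) :=
    Finset.prod_congr rfl fun s _ => Finset.prod_comm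
  rw [hsw1, hsw2]
  have htel : (∏ s ∈ range a, ∏ r ∈ range c, ∏ t ∈ range b, (1 - q ^ (s+t+r+2))) =
      (∏ s ∈ range a, ∏ r ∈ range c, ∏ t ∈ range b, (1 - q ^ (s+t+r+1))) *
        ∏ s ∈ range a, ∏ r ∈ range c, ((1 - q ^ (s+b+r+1)) / (1 - q ^ (s+r+1))) := by
    rw [← Finset.prod_mul_distrib]
    refine Finset.prod_congr rfl fun s _ => ?_
    rw [← Finset.prod_mul_distrib]
    exact Finset.prod_congr rfl fun r _ => telescope s r b
  rw [htel]
  have hmatch : (∑ π ∈ Pfin a b c, q ^ (∑ i, ∑ j, π i j)) =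
      ∏ s ∈ range a, ∏ r ∈ range c, ((1 - q ^ (s+b+r+1)) / (1 - q ^ (s+r+1))) := by
    rw [sum_pp_eq a b c, Finset.prod_comm]
    rw [← Finset.prod_range_reflect
      (fun s => ∏ r ∈ range c, ((1 - q ^ (s+b+r+1)) / (1 - q ^ (s+r+1)))) a]
    refine Finset.prod_congr rfl fun i hi => Finset.prod_congr rfl fun r _ => ?_
    rw [mem_range] at hi
    rw [show (a-1-i)+b+r+1 = b+(a+r)-i from by omega,
      show (a-1-i)+r+1 = a+r-i from by omega]
  rw [hmatch]
  ring


def Ppoly (a b c : ℕ) : Polynomial ℚ :=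
  ∑ π ∈ Pfin a b c, Polynomial.X ^ (∑ i, ∑ j, π i j)

lemma poly_main (a b c : ℕ) :
    Ppoly a b c *
      (∏ s ∈ range a, ∏ t ∈ range b, ∏ r ∈ range c, (1 - Polynomial.X ^ (s+t+r+1))) =
      ∏ s ∈ range a, ∏ t ∈ range b, ∏ r ∈ range c,
        (1 - (Polynomial.X : Polynomial ℚ) ^ (s+t+r+2)) := by
  apply RatFunc.algebraMap_injective ℚ
  have h := ratfunc_main a b c
  simp only [map_mul, map_prod, map_sum, map_sub, map_pow, map_one, Ppoly,
    RatFunc.algebraMap_X]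
  exact h

lemma constCoeff_one_sub_pow (e : ℕ) (he : e ≠ 0) :
    PowerSeries.constantCoeff (R := ℚ) (1 - PowerSeries.X ^ e) = 1 := by
  rw [map_sub, map_one, map_pow, PowerSeries.constantCoeff_X, zero_pow he, sub_zero]

lemma one_sub_X_pow_ne_zero (e : ℕ) (he : e ≠ 0) :
    (1 : PowerSeries ℚ) - PowerSeries.X ^ e ≠ 0 := by
  intro h
  have := constCoeff_one_sub_pow e he
  rw [h, map_zero] at this
  exact one_ne_zero this.symm

lemma Mbox_eq (a b c : ℕ) :
    Mbox a b c = ((Ppoly a b c : Polynomial ℚ) : PowerSeries ℚ) := by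
  have hps : ((Ppoly a b c : Polynomial ℚ) : PowerSeries ℚ) *
      (∏ s ∈ range a, ∏ t ∈ range b, ∏ r ∈ range c,
        (1 - (PowerSeries.X : PowerSeries ℚ) ^ (s+t+r+1))) =
      ∏ s ∈ range a, ∏ t ∈ range b, ∏ r ∈ range c,
        (1 - (PowerSeries.X : PowerSeries ℚ) ^ (s+t+r+2)) := by
    have h := congrArg (Polynomial.coeToPowerSeries.ringHom (R := ℚ)) (poly_main a b c)
    simp only [map_mul, map_prod, map_sub, map_pow, map_one,
      Polynomial.coeToPowerSeries.ringHom_apply, Polynomial.coe_X] at h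
    exact h
  have hMb : Mbox a b c *
      (∏ s ∈ range a, ∏ t ∈ range b, ∏ r ∈ range c,
        (1 - (PowerSeries.X : PowerSeries ℚ) ^ (s+t+r+1))) =
      ∏ s ∈ range a, ∏ t ∈ range b, ∏ r ∈ range c,
        (1 - (PowerSeries.X : PowerSeries ℚ) ^ (s+t+r+2)) := by
    unfold Mbox
    rw [← Finset.prod_mul_distrib]
    refine Finset.prod_congr rfl fun s _ => ?_
    rw [← Finset.prod_mul_distrib]
    refine Finset.prod_congr rfl fun t _ => ?_
    rw [← Finset.prod_mul_distrib]
    refine Finset.prod_congr rfl fun r _ => ?_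
    rw [mul_assoc]
    rw [PowerSeries.inv_mul_cancel _ (by
      rw [constCoeff_one_sub_pow (s+t+r+1) (by omega)]
      exact one_ne_zero)]
    rw [mul_one]
  have hZ : (∏ s ∈ range a, ∏ t ∈ range b, ∏ r ∈ range c,
      (1 - (PowerSeries.X : PowerSeries ℚ) ^ (s+t+r+1))) ≠ 0 := by
    refine Finset.prod_ne_zero_iff.2 fun s _ => Finset.prod_ne_zero_iff.2 fun t _ =>
      Finset.prod_ne_zero_iff.2 fun r _ => one_sub_X_pow_ne_zero _ (by omega)
  exact mul_right_cancel₀ hZ (hMb.trans hps.symm)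

end

end MacMahonAux

open MacMahonAux in
/-- MacMahon's boxed plane partition formula: `M_{a,b,c}(q)` is the generating
function for plane partitions in an `a × b × c` box, by number of boxes. -/
theorem macMahon_boxed (a b c n : ℕ) :
    PowerSeries.coeff n (Mbox a b c) =
      Nat.card {π : Fin a → Fin b → ℕ //
        IsBoxedPP a b c π ∧ ∑ i, ∑ j, π i j = n} := by
  classical
  rw [Mbox_eq]
  rw [Polynomial.coeff_coe]
  unfold Ppoly
  rw [Polynomial.finset_sum_coeff]
  rw [Finset.sum_congr rfl fun π _ => Polynomial.coeff_X_pow _ _]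
  have hcard : Nat.card {π : Fin a → Fin b → ℕ //
      IsBoxedPP a b c π ∧ ∑ i, ∑ j, π i j = n} =
      #((Pfin a b c).filter fun π => n = ∑ i, ∑ j, π i j) := by
    rw [← Nat.card_eq_finsetCard]
    apply Nat.card_congr
    apply Equiv.subtypeEquivRight
    intro π
    rw [Finset.mem_filter, mem_Pfin]
    constructor
    · rintro ⟨h1, h2⟩
      exact ⟨h1, h2.symm⟩
    · rintro ⟨h1, h2⟩
      exact ⟨h1, h2.symm⟩
  rw [hcard]
  rw [← Finset.sum_filter]
  rw [Finset.sum_const]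
  simp
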